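/- arXiv:1512.03982 — 7 statements merged into one kernel-verified Lean document; each statement's English description precedes it below -/
import Mathlib

section
/- (Theorem 1) Let g1, g2 > 0 be channel gains, gm = min(g1,g2), gM = max(g1,g2), and R a real number. Then E_PNC(R) ≤ E_DNC(R) if and only if 1/(2·gm) − 1/(2·gM) ≤ 2^R(2^R − 2)/gM. -/
/-- PNC uplink energy usage: `E_PNC(R) = (2^R - 1/2) * (1/g1 + 1/g2)`. -/
noncomputable def EPNC (g1 g2 R : ℝ) : ℝ := ((2 : ℝ) ^ R - 1 / 2) * (1 / g1 + 1 / g2)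

/-- SPC-DNC uplink energy usage:
`E_DNC(R) = (2^R - 1)/gm + 2^R (2^R - 1)/gM` with `gm = min g1 g2`, `gM = max g1 g2`. -/
noncomputable def EDNC (g1 g2 R : ℝ) : ℝ :=
  ((2 : ℝ) ^ R - 1) / min g1 g2 + (2 : ℝ) ^ R * ((2 : ℝ) ^ R - 1) / max g1 g2

theorem stmt_1 (g1 g2 R : ℝ) (hg1 : 0 < g1) (hg2 : 0 < g2) :
    EPNC g1 g2 R ≤ EDNC g1 g2 R ↔
      1 / (2 * min g1 g2) - 1 / (2 * max g1 g2) ≤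
        (2 : ℝ) ^ R * ((2 : ℝ) ^ R - 2) / max g1 g2 := by
  have hm : 0 < min g1 g2 := lt_min hg1 hg2
  have hM : 0 < max g1 g2 := lt_max_of_lt_left hg1
  have key : 1 / g1 + 1 / g2 = 1 / min g1 g2 + 1 / max g1 g2 := by
    rcases le_total g1 g2 with h | h
    · rw [min_eq_left h, max_eq_right h]
    · rw [min_eq_right h, max_eq_left h]; ring
  have hdiff : EDNC g1 g2 R - EPNC g1 g2 R =
      (2 : ℝ) ^ R * ((2 : ℝ) ^ R - 2) / max g1 g2 -
        (1 / (2 * min g1 g2) - 1 / (2 * max g1 g2)) := by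
    unfold EPNC EDNC
    rw [key]
    generalize min g1 g2 = m at hm ⊢
    generalize max g1 g2 = M at hM ⊢
    field_simp
    ring
  constructor <;> intro h <;> linarith
end

section
/- (Lemma 1) Let g > 0 and suppose both channel gains are equal: g1 = g2 = g. Then for any real R, E_PNC(R) ≤ E_DNC(R) if and only if R ≥ 1. -/
/-! With equal gains both energies are `(p(2^R) - 1) / g`, for `p x = 2x` (PNC) and `p x = x²`
(DNC), so the comparison reduces to `2 · 2^R ≤ 2^R · 2^R`, i.e. `2 ≤ 2^R`. -/

theorem EPNC_self (g R : ℝ) : EPNC g g R = (2 * (2 : ℝ) ^ R - 1) / g := by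
  rw [EPNC]
  ring

theorem EDNC_self (g R : ℝ) : EDNC g g R = ((2 : ℝ) ^ R * (2 : ℝ) ^ R - 1) / g := by
  rw [EDNC, min_self, max_self]
  ring

theorem two_le_two_rpow_iff (R : ℝ) : (2 : ℝ) ≤ 2 ^ R ↔ 1 ≤ R := by
  simpa only [Real.rpow_one] using Real.rpow_le_rpow_left_iff one_lt_two (y := 1) (z := R)

theorem stmt_2 (g : ℝ) (hg : 0 < g) (R : ℝ) :
    EPNC g g R ≤ EDNC g g R ↔ 1 ≤ R := by
  rw [EPNC_self, EDNC_self, div_le_div_iff_of_pos_right hg, sub_le_sub_iff_right,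
    mul_le_mul_iff_of_pos_right (Real.rpow_pos_of_pos two_pos R), two_le_two_rpow_iff]
end

section
/- Let g > 0 and suppose both channel gains are equal: g1 = g2 = g. Then for any real R, E_PNC(R) < E_DNC(R) if and only if R > 1, and E_PNC(1) = E_DNC(1). -/
theorem stmt_3 (g : ℝ) (hg : 0 < g) :
    (∀ R : ℝ, EPNC g g R < EDNC g g R ↔ 1 < R) ∧ EPNC g g 1 = EDNC g g 1 := by
  have hgne : g ≠ 0 := hg.ne'
  constructor
  · intro R
    set x : ℝ := (2 : ℝ) ^ R with hx
    have hx0 : 0 < x := Real.rpow_pos_of_pos two_pos R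
    have e1 : EPNC g g R = (2 * x - 1) / g := by unfold EPNC; field_simp; ring
    have e2 : EDNC g g R = (x * x - 1) / g := by
      unfold EDNC; rw [min_self, max_self]; field_simp; ring
    rw [e1, e2, div_lt_div_iff_of_pos_right hg]
    have h2 : (2:ℝ) ^ (1:ℝ) < x ↔ 1 < R := Real.rpow_lt_rpow_left_iff one_lt_two
    rw [Real.rpow_one] at h2
    rw [← h2]
    constructor <;> intro h <;> nlinarith
  · unfold EPNC EDNC
    rw [Real.rpow_one, min_self, max_self]
    field_simp
    ring
end

section
/- Let g1, g2 > 0 be channel gains, gm = min(g1,g2), gM = max(g1,g2), and R ≥ 0. Then E_PNC(R) ≤ E_DNC(R) if and only if R ≥ log₂(1 + √(1 + (gM/gm − 1)/2)). In particular, PNC is more energy-efficient exactly at rates above this explicit threshold. -/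
theorem stmt_4 (g1 g2 R : ℝ) (hg1 : 0 < g1) (hg2 : 0 < g2) (hR : 0 ≤ R) :
    EPNC g1 g2 R ≤ EDNC g1 g2 R ↔
      Real.logb 2 (1 + Real.sqrt (1 + (max g1 g2 / min g1 g2 - 1) / 2)) ≤ R := by
  set a := min g1 g2 with ha'
  set b := max g1 g2 with hb'
  have ha : 0 < a := lt_min hg1 hg2
  have hb : 0 < b := lt_of_lt_of_le ha (min_le_max)
  have hab : a ≤ b := min_le_max
  have harg : (1 : ℝ) ≤ 1 + (b / a - 1) / 2 := by
    have : (1 : ℝ) ≤ b / a := (one_le_div ha).mpr hab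
    linarith
  have harg0 : (0 : ℝ) ≤ 1 + (b / a - 1) / 2 := by linarith
  set s := Real.sqrt (1 + (b / a - 1) / 2) with hs'
  have hs0 : 0 ≤ s := Real.sqrt_nonneg _
  set t := (2 : ℝ) ^ R with ht'
  have ht1 : (1 : ℝ) ≤ t := Real.one_le_rpow (by norm_num) hR
  have hsum : 1 / g1 + 1 / g2 = 1 / a + 1 / b := by
    rcases le_total g1 g2 with h | h
    · rw [ha', hb', min_eq_left h, max_eq_right h]
    · rw [ha', hb', min_eq_right h, max_eq_left h]; ring
  have key : EPNC g1 g2 R ≤ EDNC g1 g2 R ↔ 1 + (b / a - 1) / 2 ≤ (t - 1) ^ 2 := by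
    rw [EPNC, EDNC, hsum, ← ht', ← ha', ← hb']
    rw [div_add_div _ _ (ne_of_gt ha) (ne_of_gt hb), div_add_div _ _ (ne_of_gt ha) (ne_of_gt hb),
      ← mul_div_assoc, div_le_div_iff_of_pos_right (by positivity : (0:ℝ) < a * b)]
    have hba : b / a * a = b := div_mul_cancel₀ b (ne_of_gt ha)
    constructor <;> intro h <;> nlinarith [hba, mul_pos ha hb, sq_nonneg (t - 1), ha, hb]
  rw [key, Real.logb_le_iff_le_rpow (by norm_num) (by positivity), ← ht']
  have hsq : s ^ 2 = 1 + (b / a - 1) / 2 := Real.sq_sqrt harg0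
  constructor
  · intro h
    have : s ≤ t - 1 := by
      rw [hs', Real.sqrt_le_left (by linarith)]
      exact h
    linarith
  · intro h
    have hst : s ≤ t - 1 := by linarith
    nlinarith
end

section
/- Let g1, g2 > 0 be channel gains, gm = min(g1,g2), gM = max(g1,g2). The function R ↦ E_PNC(R) − E_DNC(R) is strictly decreasing on the interval (0, ∞). -/
/-! With `x = 2^R`, the difference `E_PNC - E_DNC` equals `1/(2 gm) + (1/2 - (x - 1)^2)/gM`,
because `1/g1 + 1/g2 = 1/gm + 1/gM`. Since `gM > 0` and `(2^R - 1)^2` is strictly increasing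
for `R > 0`, the difference is strictly decreasing there. -/

lemma one_div_min_add_one_div_max (a b : ℝ) : 1 / min a b + 1 / max a b = 1 / a + 1 / b := by
  rcases le_total a b with h | h
  · rw [min_eq_left h, max_eq_right h]
  · rw [min_eq_right h, max_eq_left h, add_comm]

lemma EPNC_sub_EDNC (g1 g2 R : ℝ) :
    EPNC g1 g2 R - EDNC g1 g2 R =
      1 / (2 * min g1 g2) + (1 / 2 - ((2 : ℝ) ^ R - 1) ^ 2) / max g1 g2 := by
  rw [EPNC, EDNC, ← one_div_min_add_one_div_max]
  ring

lemma strictMonoOn_two_rpow_sub_one_sq :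
    StrictMonoOn (fun R : ℝ => ((2 : ℝ) ^ R - 1) ^ 2) (Set.Ioi 0) := by
  intro a ha b _ hab
  have hpos : 0 ≤ (2 : ℝ) ^ a - 1 := sub_nonneg.2 (Real.one_le_rpow (by norm_num) ha.le)
  have hlt : (2 : ℝ) ^ a < (2 : ℝ) ^ b := Real.rpow_lt_rpow_of_exponent_lt (by norm_num) hab
  exact pow_lt_pow_left₀ (sub_lt_sub_right hlt 1) hpos two_ne_zero

theorem stmt_5_general (g1 g2 : ℝ) (hg1 : 0 < g1) :
    StrictAntiOn (fun R : ℝ => EPNC g1 g2 R - EDNC g1 g2 R) (Set.Ioi (0 : ℝ)) := by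
  have hM : 0 < max g1 g2 := lt_max_of_lt_left hg1
  intro a ha b hb hab
  simp only [EPNC_sub_EDNC]
  gcongr _ + (_ - ?_) / _
  exact strictMonoOn_two_rpow_sub_one_sq ha hb hab

theorem stmt_5 (g1 g2 : ℝ) (hg1 : 0 < g1) (hg2 : 0 < g2) :
    StrictAntiOn (fun R : ℝ => EPNC g1 g2 R - EDNC g1 g2 R) (Set.Ioi (0 : ℝ)) :=
  stmt_5_general g1 g2 hg1
end

section
/- Let g1, g2 > 0 be channel gains, gm = min(g1,g2), gM = max(g1,g2). Then E_PNC(0) − E_DNC(0) = 1/(2·gm) + 1/(2·gM) > 0, and there exists a unique R* > 0 such that E_PNC(R) > E_DNC(R) for all 0 ≤ R < R* and E_PNC(R) < E_DNC(R) for all R > R*. -/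
theorem stmt_6 (g1 g2 : ℝ) (hg1 : 0 < g1) (hg2 : 0 < g2) :
    (EPNC g1 g2 0 - EDNC g1 g2 0 = 1 / (2 * min g1 g2) + 1 / (2 * max g1 g2)) ∧
    (0 < 1 / (2 * min g1 g2) + 1 / (2 * max g1 g2)) ∧
    (∃! Rstar : ℝ, 0 < Rstar ∧
      (∀ R : ℝ, 0 ≤ R → R < Rstar → EDNC g1 g2 R < EPNC g1 g2 R) ∧
      (∀ R : ℝ, Rstar < R → EPNC g1 g2 R < EDNC g1 g2 R)) := by
  have hgm0 : 0 < min g1 g2 := lt_min hg1 hg2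
  have hgM0 : 0 < max g1 g2 := lt_of_lt_of_le hgm0 min_le_max
  set gm := min g1 g2 with hgm
  set gM := max g1 g2 with hgM
  set c : ℝ := 1 / (2 * gm) + 1 / (2 * gM) with hc
  have hc0 : 0 < c := by positivity
  have hsum : 1 / g1 + 1 / g2 = 1 / gm + 1 / gM := by
    rcases le_total g1 g2 with h | h
    · rw [hgm, hgM, min_eq_left h, max_eq_right h]
    · rw [hgm, hgM, min_eq_right h, max_eq_left h]; ring
  have key : ∀ R : ℝ, EPNC g1 g2 R - EDNC g1 g2 R = c - ((2:ℝ)^R - 1)^2 / gM := by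
    intro R
    simp only [EPNC, EDNC, ← hgm, ← hgM, hsum, hc]
    field_simp
    ring
  refine ⟨?_, hc0, ?_⟩
  · have h0 := key 0
    simp only [Real.rpow_zero] at h0
    norm_num at h0
    linarith
  · set s : ℝ := Real.sqrt (c * gM) with hs
    have hs0 : 0 < s := Real.sqrt_pos.mpr (by positivity)
    have hs2 : s ^ 2 = c * gM := Real.sq_sqrt (by positivity)
    set Rstar : ℝ := Real.logb 2 (1 + s) with hR
    have h2R : (2:ℝ) ^ Rstar = 1 + s :=
      Real.rpow_logb two_pos (by norm_num) (by linarith)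
    have hR0 : 0 < Rstar := Real.logb_pos (by norm_num) (by linarith)
    have hmono : ∀ a b : ℝ, a < b → (2:ℝ) ^ a < (2:ℝ) ^ b := fun a b h =>
      Real.rpow_lt_rpow_left_iff (by norm_num : (1:ℝ) < 2) |>.mpr h
    refine ⟨Rstar, ⟨hR0, ?_, ?_⟩, ?_⟩
    · intro R hR0' hRlt
      have h1 : (1:ℝ) ≤ (2:ℝ) ^ R := by
        have := Real.rpow_le_rpow_of_exponent_le (by norm_num : (1:ℝ) ≤ 2) hR0'
        simpa using this
      have h2 : (2:ℝ) ^ R < 1 + s := h2R ▸ hmono R Rstar hRlt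
      have hq : ((2:ℝ)^R - 1)^2 < s ^ 2 := by nlinarith
      have := key R
      rw [hs2] at hq
      have hdiv : ((2:ℝ)^R - 1)^2 / gM < c := (div_lt_iff₀ hgM0).mpr (by linarith)
      linarith
    · intro R hRgt
      have h2 : 1 + s < (2:ℝ) ^ R := h2R ▸ hmono Rstar R hRgt
      have hq : s ^ 2 < ((2:ℝ)^R - 1)^2 := by nlinarith
      have := key R
      rw [hs2] at hq
      have hdiv : c < ((2:ℝ)^R - 1)^2 / gM := (lt_div_iff₀ hgM0).mpr (by linarith)
      linarith
    · rintro y ⟨hy0, hy1, hy2⟩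
      by_contra hne
      rcases lt_or_gt_of_ne hne with h | h
      · set R := (y + Rstar) / 2 with hRdef
        have h1 : y < R := by rw [hRdef]; linarith
        have h2 : R < Rstar := by rw [hRdef]; linarith
        have ha := hy2 R h1
        -- need Rstar's first property: stored where? use the one we proved
        have hb : EDNC g1 g2 R < EPNC g1 g2 R := by
          have h1' : (1:ℝ) ≤ (2:ℝ) ^ R := by
            have := Real.rpow_le_rpow_of_exponent_le (by norm_num : (1:ℝ) ≤ 2)
              (by linarith : (0:ℝ) ≤ R)
            simpa using this
          have h2' : (2:ℝ) ^ R < 1 + s := h2R ▸ hmono R Rstar h2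
          have hq : ((2:ℝ)^R - 1)^2 < s ^ 2 := by nlinarith
          have := key R
          rw [hs2] at hq
          have hdiv : ((2:ℝ)^R - 1)^2 / gM < c := (div_lt_iff₀ hgM0).mpr (by linarith)
          linarith
        linarith
      · set R := (Rstar + y) / 2 with hRdef
        have h1 : Rstar < R := by rw [hRdef]; linarith
        have h2 : R < y := by rw [hRdef]; linarith
        have ha := hy1 R (by linarith) h2
        have hb : EPNC g1 g2 R < EDNC g1 g2 R := by
          have h2' : 1 + s < (2:ℝ) ^ R := h2R ▸ hmono Rstar R h1
          have hq : s ^ 2 < ((2:ℝ)^R - 1)^2 := by nlinarith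
          have := key R
          rw [hs2] at hq
          have hdiv : c < ((2:ℝ)^R - 1)^2 / gM := (lt_div_iff₀ hgM0).mpr (by linarith)
          linarith
        linarith
end

section
/- Let g1, g2 > 0, gm = min(g1,g2), gM = max(g1,g2). The function Θ_u^DNC(T, f) = f · (2^(2T/f)/gM + 2^(T/f)·(1/gm − 1/gM) − 1/gm) is convex on the set {(T, f) ∈ ℝ² : f > 0}. -/
/-!
`Θ_u^DNC` is the perspective `(T, f) ↦ f φ(T / f)` of the sum-power function
`φ R = 4^R / gM + 2^R (1/gm - 1/gM) - 1/gm`, which is convex because `gm ≤ gM` makes the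
coefficient of `2^R` nonnegative; perspectives of convex functions are convex. For the latter,
with `s = a t₁ + b t₂`, the point `s⁻¹ • (a x₁ + b x₂)` is the convex combination of `t₁⁻¹ • x₁`
and `t₂⁻¹ • x₂` with weights `a t₁ / s` and `b t₂ / s`, so Jensen's inequality for `f`,
multiplied by `s`, is the convexity inequality for the perspective.
-/

open Set

section Perspective

variable {𝕜 E : Type*} [Field 𝕜] [AddCommGroup E] [Module 𝕜 E]

lemma perspective_combo_eq {x₁ x₂ : E} {t₁ t₂ a b : 𝕜} (ht₁ : t₁ ≠ 0) (ht₂ : t₂ ≠ 0)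
    (hs : a * t₁ + b * t₂ ≠ 0) :
    (a * t₁ + b * t₂)⁻¹ • (a • x₁ + b • x₂)
      = (a * t₁ / (a * t₁ + b * t₂)) • (t₁⁻¹ • x₁)
        + (b * t₂ / (a * t₁ + b * t₂)) • (t₂⁻¹ • x₂) := by
  simp only [smul_smul, smul_add]
  congr 2 <;> field_simp

variable [LinearOrder 𝕜] [IsStrictOrderedRing 𝕜]

theorem ConvexOn.perspective {s : Set E} {f : E → 𝕜} (hf : ConvexOn 𝕜 s f) :
    ConvexOn 𝕜 {p : E × 𝕜 | 0 < p.2 ∧ p.2⁻¹ • p.1 ∈ s} (fun p => p.2 * f (p.2⁻¹ • p.1)) := by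
  have combo : ∀ ⦃x₁ : E⦄ ⦃t₁ : 𝕜⦄, 0 < t₁ → t₁⁻¹ • x₁ ∈ s → ∀ ⦃x₂ : E⦄ ⦃t₂ : 𝕜⦄, 0 < t₂ →
      t₂⁻¹ • x₂ ∈ s → ∀ ⦃a b : 𝕜⦄, 0 ≤ a → 0 ≤ b → a + b = 1 →
      0 < a * t₁ + b * t₂ ∧ (a * t₁ + b * t₂)⁻¹ • (a • x₁ + b • x₂) ∈ s ∧
      (a * t₁ + b * t₂) * f ((a * t₁ + b * t₂)⁻¹ • (a • x₁ + b • x₂))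
        ≤ a * (t₁ * f (t₁⁻¹ • x₁)) + b * (t₂ * f (t₂⁻¹ • x₂)) := by
    intro x₁ t₁ ht₁ hx₁ x₂ t₂ ht₂ hx₂ a b ha hb hab
    have hs : 0 < a * t₁ + b * t₂ := convex_Ioi (0 : 𝕜) ht₁ ht₂ ha hb hab
    have hμ₁ : 0 ≤ a * t₁ / (a * t₁ + b * t₂) := by positivity
    have hμ₂ : 0 ≤ b * t₂ / (a * t₁ + b * t₂) := by positivity
    have hμ : a * t₁ / (a * t₁ + b * t₂) + b * t₂ / (a * t₁ + b * t₂) = 1 := by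
      field_simp
    rw [perspective_combo_eq ht₁.ne' ht₂.ne' hs.ne']
    refine ⟨hs, hf.1 hx₁ hx₂ hμ₁ hμ₂ hμ, ?_⟩
    calc (a * t₁ + b * t₂) * f ((a * t₁ / (a * t₁ + b * t₂)) • (t₁⁻¹ • x₁)
            + (b * t₂ / (a * t₁ + b * t₂)) • (t₂⁻¹ • x₂))
        ≤ (a * t₁ + b * t₂) * ((a * t₁ / (a * t₁ + b * t₂)) • f (t₁⁻¹ • x₁)
            + (b * t₂ / (a * t₁ + b * t₂)) • f (t₂⁻¹ • x₂)) :=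
          mul_le_mul_of_nonneg_left (hf.2 hx₁ hx₂ hμ₁ hμ₂ hμ) hs.le
      _ = a * (t₁ * f (t₁⁻¹ • x₁)) + b * (t₂ * f (t₂⁻¹ • x₂)) := by
          simp only [smul_eq_mul]
          field_simp
  refine ⟨?_, ?_⟩ <;> rintro ⟨x₁, t₁⟩ ⟨ht₁, hx₁⟩ ⟨x₂, t₂⟩ ⟨ht₂, hx₂⟩ a b ha hb hab
  · exact (combo ht₁ hx₁ ht₂ hx₂ ha hb hab).imp_right And.left
  · exact (combo ht₁ hx₁ ht₂ hx₂ ha hb hab).2.2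

end Perspective

lemma convexOn_two_rpow_two_mul : ConvexOn ℝ univ fun x : ℝ => (2 : ℝ) ^ (2 * x) := by
  simpa only [Real.rpow_mul zero_le_two] using
    convexOn_rpow_left (by positivity : (0 : ℝ) < 2 ^ (2 : ℝ))

/-- The perspective-type transform
`Θ_u^DNC(T, f) = f * (2^(2T/f)/gM + 2^(T/f) * (1/gm - 1/gM) - 1/gm)` of the SPC-DNC uplink
sum-power function is convex on the half-plane `{(T, f) : f > 0}`, where
`gm = min g1 g2` and `gM = max g1 g2`. -/
theorem stmt_10 (g1 g2 : ℝ) (hg1 : 0 < g1) (hg2 : 0 < g2) :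
    ConvexOn ℝ {p : ℝ × ℝ | 0 < p.2}
      (fun p : ℝ × ℝ =>
        p.2 * ((2 : ℝ) ^ (2 * p.1 / p.2) / max g1 g2
          + (2 : ℝ) ^ (p.1 / p.2) * (1 / min g1 g2 - 1 / max g1 g2) - 1 / min g1 g2)) := by
  have hgap : 0 ≤ 1 / min g1 g2 - 1 / max g1 g2 :=
    sub_nonneg.2 (one_div_le_one_div_of_le (lt_min hg1 hg2) min_le_max)
  have hφ : ConvexOn ℝ univ fun R : ℝ => (2 : ℝ) ^ (2 * R) / max g1 g2
      + (2 : ℝ) ^ R * (1 / min g1 g2 - 1 / max g1 g2) - 1 / min g1 g2 := by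
    have := ((convexOn_two_rpow_two_mul.smul (by positivity : 0 ≤ (max g1 g2)⁻¹)).add
      ((convexOn_rpow_left two_pos).smul hgap)).add_const (-(1 / min g1 g2))
    refine this.congr fun R _ => ?_
    simp only [Pi.add_apply, smul_eq_mul]
    ring
  have hdom : {p : ℝ × ℝ | 0 < p.2 ∧ p.2⁻¹ • p.1 ∈ univ} = {p | 0 < p.2} := by simp
  refine (hdom ▸ hφ.perspective).congr fun p _ => ?_
  simp only [smul_eq_mul, inv_mul_eq_div, mul_div_assoc]
end
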